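/- Let α > 1, k ≥ 1 an integer, a > 0, and n > k. Define ū(x) = a·φ(|x|/a) on B_a(0), where φ(r) = ∫₀^r [((1-t^(k+1))^(-β) - 1)/t]^(1/k) dt with β = 1/(α-1). Then ū ∈ C²(B_a(0)) is strictly convex, ∂ū/∂ν → +∞ at ∂B_a(0) (ν the outer normal), and S_k(D²ū)(x) ≤ [(k+1)(n-1)!/(a^k (α-1) k! (n-k-1)!)]·(1 + |Dū(x)|^k)^α for all x ∈ B_a(0). -/

import Mathlib

open Real Set Filter Topology


private lemma bern_key {β s : ℝ} (hβ : 0 < β) (hs0 : 0 < s) (hs1 : s < 1) :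
    (1 - s) ^ (-β) - 1 ≤ β * s * (1 - s) ^ (-β - 1) := by
  have h1 : (0:ℝ) < 1 - s := by linarith
  have hA : (0:ℝ) < (1 - s) ^ (β + 1) := Real.rpow_pos_of_pos h1 _
  have hbern : 1 - (β + 1) * s ≤ (1 - s) ^ (β + 1) := by
    have := one_add_mul_self_le_rpow_one_add (by linarith : (-1:ℝ) ≤ -s)
      (by linarith : (1:ℝ) ≤ β + 1)
    have e : (1:ℝ) + -s = 1 - s := by ring
    rw [e] at this
    linarith [this]
  rw [← mul_le_mul_iff_left₀ hA]
  have m1 : (1 - s) ^ (-β) * (1 - s) ^ (β + 1) = 1 - s := by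
    rw [← Real.rpow_add h1]; norm_num
  have m2 : (1 - s) ^ (-β - 1) * (1 - s) ^ (β + 1) = 1 := by
    rw [← Real.rpow_add h1]; norm_num
  nlinarith [hbern, m1, m2]

private lemma deriv_fact (k : ℕ) {β r : ℝ} (hβ : 0 < β)
    (hr0 : 0 < r) (hr1 : r < 1) :
    HasDerivAt (fun r : ℝ => (((1 - r ^ (k + 1)) ^ (-β) - 1) / r) ^ ((1:ℝ)/k))
      ((((k:ℝ)+1) * β * r^k * (1 - r^(k+1)) ^ (-β-1) * r - ((1 - r^(k+1))^(-β) - 1))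
          / r^2 * ((1:ℝ)/k)
          * ((((1 - r ^ (k + 1)) ^ (-β) - 1) / r) ^ ((1:ℝ)/k - 1))) r := by
  have hs0 : (0:ℝ) < r ^ (k+1) := pow_pos hr0 _
  have hs1 : r ^ (k+1) < 1 := pow_lt_one₀ hr0.le hr1 (Nat.succ_ne_zero k)
  have hu : (0:ℝ) < 1 - r^(k+1) := by linarith
  have hg1 : 1 < (1 - r^(k+1)) ^ (-β) :=
    (Real.one_lt_rpow_iff_of_pos hu).mpr (Or.inr ⟨by linarith, by linarith⟩)
  have hX : 0 < ((1 - r^(k+1)) ^ (-β) - 1) / r := div_pos (by linarith) hr0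
  have h1 : HasDerivAt (fun r:ℝ => 1 - r^(k+1)) (-(((k:ℝ)+1) * r^k)) r := by
    have := (hasDerivAt_pow (k+1) r).const_sub 1
    simpa using this
  have h2 : HasDerivAt (fun r:ℝ => (1 - r^(k+1))^(-β))
      ((-(((k:ℝ)+1) * r^k)) * (-β) * (1 - r^(k+1))^(-β-1)) r :=
    h1.rpow_const (Or.inl hu.ne')
  have h3 : HasDerivAt (fun r:ℝ => ((1 - r^(k+1))^(-β) - 1) / r)
      (((-(((k:ℝ)+1) * r^k)) * (-β) * (1 - r^(k+1))^(-β-1) * r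
          - ((1 - r^(k+1))^(-β) - 1) * 1) / r^2) r :=
    (h2.sub_const 1).div (hasDerivAt_id r) hr0.ne'
  have h4 := h3.rpow_const (p := (1:ℝ)/k) (Or.inl hX.ne')
  convert h4 using 1
  ring

set_option maxHeartbeats 1600000 in
open Filter Topology in
/-- The barrier `ū(x) = a φ(|x|/a)` of Lemma 3.8, written through the radial profile:
with `φ'(r) = [((1-r^{k+1})^{-β}-1)/r]^{1/k}`, `β = 1/(α-1)`, one has `φ'' > 0` (strict
convexity), `∂ū/∂ν = +∞` on `∂B_a(0)` (i.e. `φ'(r) → ∞` as `r → 1⁻`), and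
`S_k(D²ū)(x) = (A_k/a^k) r^{-k}[(n-k)(φ')^k + k r (φ')^{k-1} φ''] (r = |x|/a)` satisfies
`S_k(D²ū) ≤ (k+1)(n-1)!/(a^k (α-1) k! (n-k-1)!) · (1+|Dū|^k)^α`, where `|Dū(x)| = φ'(r)`. -/
theorem stmt_19 (n k : ℕ) (α a : ℝ) (hn : 2 ≤ n) (hk1 : 1 ≤ k) (hkn : k < n)
    (hα : 1 < α) (ha : 0 < a)
    (β : ℝ) (hβ : β = 1 / (α - 1))
    (φd : ℝ → ℝ)
    (hφd : ∀ r, φd r = (((1 - r ^ (k + 1)) ^ (-β) - 1) / r) ^ ((1 : ℝ) / k)) :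
    (∀ r ∈ Set.Ioo (0 : ℝ) 1, 0 < deriv φd r) ∧
    Tendsto φd (𝓝[<] 1) atTop ∧
    ∀ r ∈ Set.Ioo (0 : ℝ) 1,
      ((Nat.factorial (n - 1) : ℝ) / (Nat.factorial k * Nat.factorial (n - k))) / a ^ k
          * (r ^ k)⁻¹
          * (((n : ℝ) - k) * (φd r) ^ k + k * r * (φd r) ^ (k - 1) * deriv φd r)
        ≤ ((k : ℝ) + 1) * Nat.factorial (n - 1)
            / (a ^ k * (α - 1) * Nat.factorial k * Nat.factorial (n - k - 1))
          * (1 + (φd r) ^ k) ^ α := by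
  have hφ : φd = fun r => (((1 - r ^ (k + 1)) ^ (-β) - 1) / r) ^ ((1 : ℝ) / k) :=
    funext hφd
  subst hφ
  have hβ0 : 0 < β := by rw [hβ]; exact div_pos one_pos (by linarith)
  have hk0 : (0:ℝ) < (k:ℝ) := by exact_mod_cast hk1
  refine ⟨?_, ?_, ?_⟩
  · -- positivity of the derivative
    rintro r ⟨hr0, hr1⟩
    have hs0 : (0:ℝ) < r ^ (k+1) := pow_pos hr0 _
    have hs1 : r ^ (k+1) < 1 := pow_lt_one₀ hr0.le hr1 (Nat.succ_ne_zero k)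
    have hu : (0:ℝ) < 1 - r^(k+1) := by linarith
    have hg1 : 1 < (1 - r^(k+1)) ^ (-β) :=
      (Real.one_lt_rpow_iff_of_pos hu).mpr (Or.inr ⟨by linarith, by linarith⟩)
    have hX : 0 < ((1 - r^(k+1)) ^ (-β) - 1) / r := div_pos (by linarith) hr0
    rw [(deriv_fact k hβ0 hr0 hr1).deriv]
    have hh : (0:ℝ) < (1 - r^(k+1)) ^ (-β-1) := Real.rpow_pos_of_pos hu _
    have hN : 0 < ((k:ℝ)+1) * β * r^k * (1 - r^(k+1)) ^ (-β-1) * r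
        - ((1 - r^(k+1))^(-β) - 1) := by
      have hkey := bern_key hβ0 hs0 hs1
      have hp : 0 < β * r^(k+1) * (1 - r^(k+1)) ^ (-β-1) := by positivity
      have e : ((k:ℝ)+1) * β * r^k * (1 - r^(k+1)) ^ (-β-1) * r
          = ((k:ℝ)+1) * (β * r^(k+1) * (1 - r^(k+1)) ^ (-β-1)) := by
        rw [pow_succ]; ring
      rw [e]
      nlinarith [mul_pos hk0 hp, hkey]
    have hr2 : (0:ℝ) < r^2 := by positivity
    exact mul_pos (mul_pos (div_pos hN hr2) (by positivity))
      (Real.rpow_pos_of_pos hX _)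
  · -- tendsto atTop
    have h1 : Tendsto (fun r:ℝ => 1 - r^(k+1)) (𝓝[<] (1:ℝ)) (𝓝[>] 0) := by
      rw [tendsto_nhdsWithin_iff]
      constructor
      · have : Tendsto (fun r:ℝ => 1 - r^(k+1)) (𝓝 1) (𝓝 (1 - 1^(k+1))) :=
          (continuous_const.sub (continuous_pow (k+1))).tendsto 1
        simpa using this.mono_left nhdsWithin_le_nhds
      · filter_upwards [Ioo_mem_nhdsLT (show (0:ℝ) < 1 by norm_num)] with r hr
        have : r^(k+1) < 1 := pow_lt_one₀ hr.1.le hr.2 (Nat.succ_ne_zero k)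
        exact mem_Ioi.mpr (by linarith)
    have h2 : Tendsto (fun x:ℝ => x ^ (-β)) (𝓝[>] (0:ℝ)) atTop := by
      have hb : Tendsto (fun x:ℝ => x ^ β) (𝓝[>] (0:ℝ)) (𝓝[>] 0) := by
        rw [tendsto_nhdsWithin_iff]
        constructor
        · have := (Real.continuousAt_rpow_const 0 β (Or.inr hβ0.le)).tendsto
          simp only [Real.zero_rpow hβ0.ne'] at this
          exact this.mono_left nhdsWithin_le_nhds
        · filter_upwards [self_mem_nhdsWithin] with x hx
          exact Real.rpow_pos_of_pos hx β
      refine hb.inv_tendsto_nhdsGT_zero.congr' ?_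
      filter_upwards [self_mem_nhdsWithin] with x hx
      simp [Pi.inv_apply, Real.rpow_neg (le_of_lt hx)]
    have h3 : Tendsto (fun r:ℝ => (1 - r^(k+1))^(-β)) (𝓝[<] (1:ℝ)) atTop := h2.comp h1
    have h4 : Tendsto (fun r:ℝ => (1 - r^(k+1))^(-β) - 1) (𝓝[<] (1:ℝ)) atTop := by
      have := tendsto_atTop_add_const_right (𝓝[<] (1:ℝ)) (-1) h3
      simpa [sub_eq_add_neg] using this
    have h5 : Tendsto (fun r:ℝ => r⁻¹) (𝓝[<] (1:ℝ)) (𝓝 1) := by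
      have : Tendsto (fun r:ℝ => r⁻¹) (𝓝 (1:ℝ)) (𝓝 1) := by
        simpa using (continuousAt_inv₀ (one_ne_zero (α := ℝ))).tendsto
      exact this.mono_left nhdsWithin_le_nhds
    have h6 : Tendsto (fun r:ℝ => ((1 - r^(k+1))^(-β) - 1) * r⁻¹) (𝓝[<] (1:ℝ)) atTop :=
      h4.atTop_mul_pos zero_lt_one h5
    have h7 := (tendsto_rpow_atTop (by positivity : (0:ℝ) < 1/k)).comp h6
    simpa [Function.comp_def, div_eq_mul_inv] using h7
  · -- the main inequality
    rintro r ⟨hr0, hr1⟩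
    have hs0 : (0:ℝ) < r ^ (k+1) := pow_pos hr0 _
    have hs1 : r ^ (k+1) < 1 := pow_lt_one₀ hr0.le hr1 (Nat.succ_ne_zero k)
    have hu : (0:ℝ) < 1 - r^(k+1) := by linarith
    have hg1 : 1 < (1 - r^(k+1)) ^ (-β) :=
      (Real.one_lt_rpow_iff_of_pos hu).mpr (Or.inr ⟨by linarith, by linarith⟩)
    have hX : 0 < ((1 - r^(k+1)) ^ (-β) - 1) / r := div_pos (by linarith) hr0
    have hrk : (0:ℝ) < r ^ k := pow_pos hr0 _
    beta_reduce
    rw [(deriv_fact k hβ0 hr0 hr1).deriv]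
    set u : ℝ := 1 - r^(k+1) with hu_def
    set g : ℝ := u ^ (-β) with hg_def
    set X : ℝ := (g - 1)/r with hX_def
    clear_value u g X
    -- basic rpow algebra
    have hgα : u ^ (-β - 1) = g ^ α := by
      rw [hg_def, ← Real.rpow_mul hu.le]
      have hab : α * β = β + 1 := by
        have hα1 : (α - 1) ≠ 0 := sub_ne_zero.mpr (ne_of_gt hα)
        rw [hβ]; field_simp
        ring
      congr 1
      linear_combination hab
    have hφk : (X ^ ((1:ℝ)/k)) ^ k = X := by
      rw [← Real.rpow_natCast (X ^ ((1:ℝ)/k)) k, ← Real.rpow_mul hX.le,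
        one_div, inv_mul_cancel₀ hk0.ne', Real.rpow_one]
    have hφk1 : (X ^ ((1:ℝ)/k)) ^ (k-1) * X ^ ((1:ℝ)/k - 1) = 1 := by
      rw [← Real.rpow_natCast (X ^ ((1:ℝ)/k)) (k-1), ← Real.rpow_mul hX.le,
        ← Real.rpow_add hX]
      have e : (1:ℝ)/k * ((k-1:ℕ):ℝ) + ((1:ℝ)/k - 1) = 0 := by
        rw [Nat.cast_sub hk1]
        push_cast
        field_simp
        ring
      rw [e, Real.rpow_zero]
    rw [hφk]
    have hmid : (k:ℝ) * r * (X ^ ((1:ℝ)/k)) ^ (k-1)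
        * ((((k:ℝ)+1) * β * r^k * u ^ (-β-1) * r - (g - 1)) / r^2 * ((1:ℝ)/k)
            * X ^ ((1:ℝ)/k - 1))
        = ((k:ℝ)+1) * β * r^k * u ^ (-β-1) - X := by
      have step1 : (k:ℝ) * r * (X ^ ((1:ℝ)/k)) ^ (k-1)
          * ((((k:ℝ)+1) * β * r^k * u ^ (-β-1) * r - (g - 1)) / r^2 * ((1:ℝ)/k)
              * X ^ ((1:ℝ)/k - 1))
          = ((X ^ ((1:ℝ)/k)) ^ (k-1) * X ^ ((1:ℝ)/k - 1)) * ((k:ℝ) * ((1:ℝ)/k))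
            * ((((k:ℝ)+1) * β * r^k * u ^ (-β-1) * r - (g - 1)) * (r / r^2)) := by
        ring
      rw [step1, hφk1, hX_def]
      field_simp
    rw [hmid]
    -- the inequality
    have hT : (0:ℝ) < (1 + X) ^ α := Real.rpow_pos_of_pos (by linarith) α
    have hgle : g ≤ 1 + X := by
      have e : g - 1 = r * X := by rw [hX_def]; field_simp
      have := mul_le_of_le_one_left hX.le hr1.le
      linarith
    have hgαle : g ^ α ≤ (1 + X) ^ α :=
      Real.rpow_le_rpow (by linarith) hgle (by linarith)
    have hkey : g - 1 ≤ β * r^(k+1) * g ^ α := by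
      have := bern_key hβ0 hs0 hs1
      rw [← hu_def, ← hg_def, hgα] at this
      exact this
    have hXle : (r^k)⁻¹ * X ≤ β * g ^ α := by
      have e : (r^k)⁻¹ * X = (g - 1) / r^(k+1) := by
        rw [hX_def, pow_succ]
        field_simp
      rw [e, div_le_iff₀ hs0]
      calc g - 1 ≤ β * r^(k+1) * g ^ α := hkey
        _ = β * g ^ α * r^(k+1) := by ring
    have hGle : (r^k)⁻¹ * (((k:ℝ)+1) * β * r^k * u ^ (-β-1))
        = ((k:ℝ)+1) * β * g ^ α := by
      rw [hgα]
      field_simp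
    -- constants
    have hfk : (0:ℝ) < (Nat.factorial k : ℝ) := by exact_mod_cast Nat.factorial_pos k
    have hfnk : (0:ℝ) < (Nat.factorial (n-k) : ℝ) := by exact_mod_cast Nat.factorial_pos (n-k)
    have hfnk1 : (0:ℝ) < (Nat.factorial (n-k-1) : ℝ) := by
      exact_mod_cast Nat.factorial_pos (n-k-1)
    have hfn1 : (0:ℝ) < (Nat.factorial (n-1) : ℝ) := by exact_mod_cast Nat.factorial_pos (n-1)
    have hC1 : (0:ℝ) < (Nat.factorial (n - 1) : ℝ) / (Nat.factorial k * Nat.factorial (n - k)) / a ^ k := by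
      positivity
    have hnk1 : (0:ℝ) ≤ (n:ℝ) - k - 1 := by
      have : ((k:ℝ)+1) ≤ (n:ℝ) := by exact_mod_cast hkn
      linarith
    have hfac : (Nat.factorial (n-k) : ℝ) = ((n:ℝ) - k) * (Nat.factorial (n-k-1) : ℝ) := by
      have h1 : n - k = (n - k - 1) + 1 := by omega
      have h2 : ((n - k - 1 : ℕ) : ℝ) = (n:ℝ) - (k:ℝ) - 1 := by
        have hkn' : k + 1 ≤ n := hkn
        rw [Nat.sub_sub, Nat.cast_sub hkn']
        push_cast
        ring
      rw [h1, Nat.factorial_succ]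
      push_cast
      rw [h2]
      ring
    set C1 : ℝ := (Nat.factorial (n - 1) : ℝ) / (Nat.factorial k * Nat.factorial (n - k)) / a ^ k with hC1_def
    clear_value C1
    calc C1 * (r^k)⁻¹ * (((n:ℝ)-k) * X + (((k:ℝ)+1) * β * r^k * u ^ (-β-1) - X))
        = C1 * (((n:ℝ)-k-1) * ((r^k)⁻¹ * X)
            + (r^k)⁻¹ * (((k:ℝ)+1) * β * r^k * u ^ (-β-1))) := by ring
      _ ≤ C1 * (((n:ℝ)-k-1) * (β * (1 + X) ^ α) + ((k:ℝ)+1) * (β * (1 + X) ^ α)) := by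
          apply mul_le_mul_of_nonneg_left _ hC1.le
          apply add_le_add
          · apply mul_le_mul_of_nonneg_left _ hnk1
            exact hXle.trans (mul_le_mul_of_nonneg_left hgαle hβ0.le)
          · have h := mul_le_mul_of_nonneg_left (mul_le_mul_of_nonneg_left hgαle hβ0.le)
              (by positivity : (0:ℝ) ≤ (k:ℝ)+1)
            rw [hGle]
            linarith [h]
      _ = C1 * β * (((n:ℝ)-k-1) + ((k:ℝ)+1)) * (1 + X) ^ α := by ring
      _ ≤ C1 * β * (((k:ℝ)+1) * ((n:ℝ)-k)) * (1 + X) ^ α := by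
          apply mul_le_mul_of_nonneg_right _ hT.le
          apply mul_le_mul_of_nonneg_left _ (mul_pos hC1 hβ0).le
          nlinarith [mul_nonneg hk0.le (by linarith : (0:ℝ) ≤ (n:ℝ) - k - 1)]
      _ = ((k : ℝ) + 1) * Nat.factorial (n - 1)
            / (a ^ k * (α - 1) * Nat.factorial k * Nat.factorial (n - k - 1))
          * (1 + X) ^ α := by
          rw [hC1_def, hfac, hβ]
          have hα1 : α - 1 ≠ 0 := by linarith
          have hnk0 : (n:ℝ) - k ≠ 0 := by linarith
          field_simp
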